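/- arXiv:2003.09203 — 3 statements merged into one kernel-verified Lean document; each statement's English description precedes it below -/
import Mathlib

section
/- Let G be a simple graph on a finite vertex type which is a tree (connected and acyclic), let w be an integer-valued function on the vertices with total sum 0, and let f be the unique function on ordered pairs of vertices with f(u,v) = -f(v,u), f(u,v) = 0 for non-adjacent u,v, and, for every vertex v, sum over u of f(v,u) equal to w(v). Then for every edge {u,v} of G, the value f(u,v) equals the sum of w over the vertex set of the connected component containing u in the graph obtained from G by deleting the edge {u,v}. -/
open Classical in
theorem stmt5 {V : Type*} [Fintype V] (G : SimpleGraph V) (hG : G.IsTree)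
    (w : V → ℤ) (hw : ∑ v : V, w v = 0) (f : V → V → ℤ)
    (hskew : ∀ u v : V, f u v = - f v u)
    (hsupp : ∀ u v : V, ¬ G.Adj u v → f u v = 0)
    (hbal : ∀ v : V, ∑ u : V, f v u = w v) :
    ∀ u v : V, G.Adj u v →
      f u v = ∑ x ∈ Finset.univ.filter
        (fun x : V => (G.deleteEdges {s(u, v)}).Reachable u x), w x := by
  intro u v huv
  set G' := G.deleteEdges {s(u, v)} with hG'
  set S : Finset V := Finset.univ.filter (fun x : V => G'.Reachable u x) with hS
  have hmem : ∀ x, x ∈ S ↔ G'.Reachable u x := by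
    intro x; simp [hS]
  have hu : u ∈ S := (hmem u).2 (SimpleGraph.Reachable.refl u)
  have hnr : ¬ G'.Reachable u v := by
    have hb : G.IsBridge s(u, v) := by
      have hac : G.IsAcyclic := hG.2
      exact (SimpleGraph.isAcyclic_iff_forall_edge_isBridge.mp hac)
        (G.mem_edgeSet.mpr huv)
    exact (SimpleGraph.isBridge_iff.mp hb)
  have hv : v ∉ S := fun h => hnr ((hmem v).1 h)
  -- split the balance sums
  have hsplit : ∀ x : V, ∑ y : V, f x y = ∑ y ∈ S, f x y + ∑ y ∈ Sᶜ, f x y := by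
    intro x
    rw [← Finset.sum_filter_add_sum_filter_not Finset.univ (fun y => y ∈ S)]
    congr 1
    · apply Finset.sum_congr _ (fun _ _ => rfl)
      ext y; simp
    · apply Finset.sum_congr _ (fun _ _ => rfl)
      ext y; simp
  have hinner : ∑ x ∈ S, ∑ y ∈ S, f x y = 0 := by
    have h1 : ∑ x ∈ S, ∑ y ∈ S, f x y = - ∑ x ∈ S, ∑ y ∈ S, f x y := by
      nth_rewrite 1 [Finset.sum_comm]
      rw [← Finset.sum_neg_distrib]
      apply Finset.sum_congr rfl
      intro x _
      rw [← Finset.sum_neg_distrib]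
      exact Finset.sum_congr rfl fun y _ => hskew y x
    linarith
  have hcross : ∑ x ∈ S, ∑ y ∈ Sᶜ, f x y = f u v := by
    rw [← Finset.sum_product']
    rw [Finset.sum_eq_single (u, v)]
    · rintro ⟨x, y⟩ hxy hne
      simp only [Finset.mem_product, Finset.mem_compl] at hxy
      obtain ⟨hxS, hyS⟩ := hxy
      by_cases hadj : G.Adj x y
      · by_cases he : s(x, y) = s(u, v)
        · rw [Sym2.eq_iff] at he
          rcases he with ⟨rfl, rfl⟩ | ⟨rfl, rfl⟩
          · exact absurd rfl hne
          · exact absurd hxS hv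
        · have hadj' : G'.Adj x y := by
            rw [hG', SimpleGraph.deleteEdges_adj]
            exact ⟨hadj, by simpa using he⟩
          exact absurd ((hmem y).2 (((hmem x).1 hxS).trans hadj'.reachable)) hyS
      · exact hsupp x y hadj
    · intro h
      exact absurd (Finset.mem_product.mpr ⟨hu, Finset.mem_compl.mpr hv⟩) h
  calc f u v = ∑ x ∈ S, ∑ y ∈ S, f x y + ∑ x ∈ S, ∑ y ∈ Sᶜ, f x y := by
        rw [hinner, hcross]; ring
    _ = ∑ x ∈ S, (∑ y ∈ S, f x y + ∑ y ∈ Sᶜ, f x y) := by rw [Finset.sum_add_distrib]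
    _ = ∑ x ∈ S, ∑ y : V, f x y := by
        exact Finset.sum_congr rfl fun x _ => (hsplit x).symm
    _ = ∑ x ∈ S, w x := Finset.sum_congr rfl fun x _ => hbal x
end

section
/- For every integer g ≥ 1 and every k ∈ ZMod g, the permutation of the sum type (ZMod g) ⊕ (ZMod g) defined by inl i ↦ inl (k - i) and inr i ↦ inr (k - 1 - i) has sign (-1)^(g-1). In particular, this permutation is odd when g is even and even when g is odd. -/
theorem stmt9 (g : ℕ) (hg : 1 ≤ g) :
    haveI : NeZero g := ⟨by omega⟩
    ∀ k : ZMod g,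
      Equiv.Perm.sign
        (Equiv.sumCongr (Equiv.subLeft k) (Equiv.subLeft (k - 1)) :
          Equiv.Perm (ZMod g ⊕ ZMod g)) = (-1 : ℤˣ) ^ (g - 1) := by
  obtain ⟨n, rfl⟩ : ∃ n, g = n + 1 := ⟨g - 1, by omega⟩
  intro k
  rw [Equiv.Perm.sign_sumCongr, ← map_mul]
  have h : (Equiv.subLeft k) * (Equiv.subLeft (k - 1)) = (finRotate (n + 1)) := by
    ext x
    show k - ((k - 1) - x) = finRotate (n + 1) x
    rw [finRotate_succ_apply (n := n) x]
    show k - ((k - 1) - x) = x + 1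
    ring
  rw [h]
  show _ = (-1 : ℤˣ) ^ n
  exact sign_finRotate (n + 1)
end

section
/- Let g ≥ 3 be an odd integer. Then every permutation of the sum type (ZMod g) ⊕ (ZMod g) which is of one of the following two forms has sign 1: (i) inl i ↦ inl (i + k), inr i ↦ inr (i + k) for some k ∈ ZMod g; (ii) inl i ↦ inl (k - i), inr i ↦ inr (k - 1 - i) for some k ∈ ZMod g. -/
open Equiv Equiv.Perm

lemma addRight_pow_zmod (g : ℕ) (n : ℕ) :
    (Equiv.addRight (1 : ZMod g)) ^ n = Equiv.addRight (n : ZMod g) := by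
  induction n with
  | zero => ext x; simp
  | succ n ih =>
    rw [pow_succ, ih]
    ext x
    simp [Equiv.addRight]
    ring

lemma addRight_one_isCycle (g : ℕ) (hg : 3 ≤ g) :
    haveI : NeZero g := ⟨(by omega : 0 < g).ne'⟩
    (Equiv.addRight (1 : ZMod g)).IsCycle := by
  haveI : NeZero g := ⟨(by omega : 0 < g).ne'⟩
  have h10 : (1 : ZMod g) ≠ 0 := by
    have : Fact (1 < g) := ⟨by omega⟩
    exact one_ne_zero
  refine ⟨0, ?_, ?_⟩
  · simpa using fun h => h10 h
  · intro y _
    refine ⟨(y.val : ℤ), ?_⟩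
    rw [zpow_natCast, addRight_pow_zmod]
    simp [ZMod.natCast_val, ZMod.cast_id]

lemma sign_addRight (g : ℕ) (hg : 3 ≤ g) (hodd : Odd g) (k : ZMod g) :
    haveI : NeZero g := ⟨(by omega : 0 < g).ne'⟩
    Equiv.Perm.sign (Equiv.addRight k) = 1 := by
  haveI : NeZero g := ⟨(by omega : 0 < g).ne'⟩
  have h1 : Equiv.Perm.sign (Equiv.addRight (1 : ZMod g)) = 1 := by
    have hc := addRight_one_isCycle g hg
    rw [hc.sign]
    · have hsupp : (Equiv.addRight (1 : ZMod g)).support = Finset.univ := by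
        ext x
        have h10 : (1 : ZMod g) ≠ 0 := by
          have : Fact (1 < g) := ⟨by omega⟩
          exact one_ne_zero
        simp
        intro h
        exact h10 (by linear_combination h)
      rw [hsupp]
      simp [ZMod.card, Odd.neg_one_pow hodd]
  have : Equiv.addRight k = (Equiv.addRight (1 : ZMod g)) ^ k.val := by
    rw [addRight_pow_zmod]
    simp [ZMod.natCast_val, ZMod.cast_id]
  rw [this, map_pow, h1, one_pow]

lemma subLeft_eq (g : ℕ) (k : ZMod g) :
    (Equiv.subLeft k : Equiv.Perm (ZMod g)) =
      (Equiv.addRight (-k)).trans (Equiv.neg (ZMod g)) := by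
  ext x
  simp [Equiv.subLeft, Equiv.addRight, Equiv.neg]
  ring

theorem stmt10 (g : ℕ) (hg : 3 ≤ g) (hodd : Odd g) :
    haveI : NeZero g := ⟨by omega⟩
    ∀ σ : Equiv.Perm (ZMod g ⊕ ZMod g),
      ((∃ k : ZMod g, σ = Equiv.sumCongr (Equiv.addRight k) (Equiv.addRight k)) ∨
       (∃ k : ZMod g, σ = Equiv.sumCongr (Equiv.subLeft k) (Equiv.subLeft (k - 1)))) →
      Equiv.Perm.sign σ = 1 := by
  haveI : NeZero g := ⟨by omega⟩
  intro σ h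
  have hsub : ∀ k : ZMod g, Equiv.Perm.sign (Equiv.subLeft k : Equiv.Perm (ZMod g)) =
      Equiv.Perm.sign (Equiv.neg (ZMod g)) := by
    intro k
    rw [subLeft_eq]
    have : ((Equiv.addRight (-k)).trans (Equiv.neg (ZMod g)) : Equiv.Perm (ZMod g)) =
        (Equiv.neg (ZMod g)) * (Equiv.addRight (-k)) := rfl
    rw [this, map_mul, sign_addRight g hg hodd, mul_one]
  rcases h with ⟨k, rfl⟩ | ⟨k, rfl⟩
  · rw [Equiv.Perm.sign_sumCongr, sign_addRight g hg hodd]; norm_num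
  · rw [Equiv.Perm.sign_sumCongr, hsub, hsub, ← sq, Int.units_sq]
end
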